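/- The map g : W_ω × W_ω → T_{2,2}, defined by interleaving — for α = x₁x₂… and β = y₁y₂… in W_ω, g(α,β) is the finite word over {a₁,a₂,b₁,b₂} obtained from the infinite sequence a_{x₁} b_{y₁} a_{x₂} b_{y₂} … (with the convention a₀ = b₀ = 0) by deleting all occurrences of 0 — is a p-morphism (surjective, open and continuous in each of the two topologies) from the bitopological product 𝒴 × 𝒴 onto Top₂(𝕋_{2,2}): g is surjective, g is open and continuous as a map from the horizontal topology of 𝒴 × 𝒴 to the Alexandrov topology T_{R₁}, and open and continuous as a map from the vertical topology of 𝒴 × 𝒴 to the Alexandrov topology T_{R₂}. -/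

import Mathlib

/- ============== Formulas ============== -/

/-- Unimodal formulas. -/
inductive MForm : Type
  | var : ℕ → MForm
  | bot : MForm
  | imp : MForm → MForm → MForm
  | box : MForm → MForm

namespace MForm
def neg (A : MForm) : MForm := A.imp .bot
def dia (A : MForm) : MForm := (MForm.box A.neg).neg
def subst (σ : ℕ → MForm) : MForm → MForm
  | var n => σ n
  | bot => bot
  | imp A B => (subst σ A).imp (subst σ B)
  | box A => MForm.box (subst σ A)
end MForm

/-- Bimodal formulas (`box 0` is □₁ and `box 1` is □₂). -/
inductive BForm : Type
  | var : ℕ → BForm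
  | bot : BForm
  | imp : BForm → BForm → BForm
  | box : Fin 2 → BForm → BForm

namespace BForm
def neg (A : BForm) : BForm := A.imp .bot
def dia (i : Fin 2) (A : BForm) : BForm := (BForm.box i A.neg).neg
def subst (σ : ℕ → BForm) : BForm → BForm
  | var n => σ n
  | bot => bot
  | imp A B => (subst σ A).imp (subst σ B)
  | box i A => BForm.box i (subst σ A)
end BForm

/-- Translation of a unimodal formula into the bimodal language,
reading □ as □ᵢ. -/
def MForm.toB (i : Fin 2) : MForm → BForm
  | .var n => .var n
  | .bot => .bot
  | .imp A B => (MForm.toB i A).imp (MForm.toB i B)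
  | .box A => BForm.box i (MForm.toB i A)

/- ============== Normal modal logics ============== -/

/-- Provability in the smallest normal unimodal logic containing the axioms `Ax`:
classical tautologies (via a Hilbert axiomatization), the normality axiom,
modus ponens, necessitation and uniform substitution. -/
inductive MProv (Ax : Set MForm) : MForm → Prop
  | axm {A : MForm} : A ∈ Ax → MProv Ax A
  | pl1 {A B : MForm} : MProv Ax (A.imp (B.imp A))
  | pl2 {A B C : MForm} : MProv Ax ((A.imp (B.imp C)).imp ((A.imp B).imp (A.imp C)))
  | pl3 {A : MForm} : MProv Ax ((A.neg.neg).imp A)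
  | kax {A B : MForm} : MProv Ax ((MForm.box (A.imp B)).imp ((MForm.box A).imp (MForm.box B)))
  | mp {A B : MForm} : MProv Ax (A.imp B) → MProv Ax A → MProv Ax B
  | nec {A : MForm} : MProv Ax A → MProv Ax (MForm.box A)
  | subst {A : MForm} (σ : ℕ → MForm) : MProv Ax A → MProv Ax (A.subst σ)

/-- Provability in the smallest normal bimodal logic containing the axioms `Ax`. -/
inductive BProv (Ax : Set BForm) : BForm → Prop
  | axm {A : BForm} : A ∈ Ax → BProv Ax A
  | pl1 {A B : BForm} : BProv Ax (A.imp (B.imp A))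
  | pl2 {A B C : BForm} : BProv Ax ((A.imp (B.imp C)).imp ((A.imp B).imp (A.imp C)))
  | pl3 {A : BForm} : BProv Ax ((A.neg.neg).imp A)
  | kax (i : Fin 2) {A B : BForm} :
      BProv Ax ((BForm.box i (A.imp B)).imp ((BForm.box i A).imp (BForm.box i B)))
  | mp {A B : BForm} : BProv Ax (A.imp B) → BProv Ax A → BProv Ax B
  | nec (i : Fin 2) {A : BForm} : BProv Ax A → BProv Ax (BForm.box i A)
  | subst {A : BForm} (σ : ℕ → BForm) : BProv Ax A → BProv Ax (A.subst σ)

/-- The propositional letter p. -/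
def pM : MForm := .var 0

/-- Axioms of S4 : □p→p and □p→□□p. -/
def S4Ax : Set MForm := {(MForm.box pM).imp pM, (MForm.box pM).imp (MForm.box (MForm.box pM))}

/-- The McKinsey axiom □◇p→◇□p. -/
def McKM : MForm := (MForm.box pM.dia).imp (MForm.box pM).dia

/-- The logic S4. -/
def S4L : Set MForm := {A | MProv S4Ax A}

/-- The logic S4.1 = S4 + McKinsey. -/
def S41L : Set MForm := {A | MProv (S4Ax ∪ {McKM}) A}

/-- Axioms of the fusion S4.1 ∗ S4 : all theorems of S4.1 read with □₁ together
with all theorems of S4 read with □₂. -/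
def FusionAx : Set BForm := (MForm.toB 0 '' S41L) ∪ (MForm.toB 1 '' S4L)

/-- The fusion S4.1 ∗ S4 (as a normal bimodal logic). -/
def FusionL : Set BForm := {A | BProv FusionAx A}

def pB : BForm := .var 0

/-- The formula ◇₁□₂(◇₁p → □₁p). -/
def MKB : BForm := BForm.dia 0 (BForm.box 1 ((BForm.dia 0 pB).imp (BForm.box 0 pB)))

/-- The logic L = S4.1 ∗ S4 + ◇₁□₂(◇₁p → □₁p). -/
def LL : Set BForm := {A | BProv (FusionAx ∪ {MKB}) A}

/- ============== Kripke semantics ============== -/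

/-- Truth of a bimodal formula at a point of a Kripke 2-frame `(W, R 0, R 1)`
under valuation `V`. -/
def BSat {W : Type} (R : Fin 2 → W → W → Prop) (V : ℕ → W → Prop) : W → BForm → Prop
  | x, .var n => V n x
  | _, .bot => False
  | x, .imp A B => BSat R V x A → BSat R V x B
  | x, .box i A => ∀ y, R i x y → BSat R V y A

/-- Frame validity for bimodal formulas. -/
def BValid {W : Type} (R : Fin 2 → W → W → Prop) (A : BForm) : Prop :=
  ∀ (V : ℕ → W → Prop) (x : W), BSat R V x A

/-- Truth of a unimodal formula at a point of a Kripke frame. -/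
def MKSat {W : Type} (R : W → W → Prop) (V : ℕ → W → Prop) : W → MForm → Prop
  | x, .var n => V n x
  | _, .bot => False
  | x, .imp A B => MKSat R V x A → MKSat R V x B
  | x, .box A => ∀ y, R x y → MKSat R V y A

/-- Frame validity for unimodal formulas. -/
def MKValid {W : Type} (R : W → W → Prop) (A : MForm) : Prop :=
  ∀ (V : ℕ → W → Prop) (x : W), MKSat R V x A

/- ============== Topological semantics ============== -/

/-- Topological truth of a unimodal formula: □A holds at `x` iff some open
neighbourhood of `x` satisfies `A` everywhere. -/
def MTSat {X : Type} (t : TopologicalSpace X) (V : ℕ → X → Prop) : X → MForm → Prop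
  | x, .var n => V n x
  | _, .bot => False
  | x, .imp A B => MTSat t V x A → MTSat t V x B
  | x, .box A => ∃ U : Set X, t.IsOpen U ∧ x ∈ U ∧ ∀ y ∈ U, MTSat t V y A

/-- Topological validity for unimodal formulas. -/
def MTValid {X : Type} (t : TopologicalSpace X) (A : MForm) : Prop :=
  ∀ (V : ℕ → X → Prop) (x : X), MTSat t V x A

/-- Bitopological truth of a bimodal formula: □ᵢ is interpreted via the
topology `t i`. -/
def BTSat {X : Type} (t : Fin 2 → TopologicalSpace X) (V : ℕ → X → Prop) : X → BForm → Prop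
  | x, .var n => V n x
  | _, .bot => False
  | x, .imp A B => BTSat t V x A → BTSat t V x B
  | x, .box i A => ∃ U : Set X, (t i).IsOpen U ∧ x ∈ U ∧ ∀ y ∈ U, BTSat t V y A

/-- Bitopological validity for bimodal formulas. -/
def BTValid {X : Type} (t : Fin 2 → TopologicalSpace X) (A : BForm) : Prop :=
  ∀ (V : ℕ → X → Prop) (x : X), BTSat t V x A

/-- The horizontal topology on `X × Y`: generated by the base
`{U × {y} : U open in X, y ∈ Y}`. -/
def horiz {X Y : Type} (t : TopologicalSpace X) : TopologicalSpace (X × Y) :=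
  TopologicalSpace.generateFrom
    {S | ∃ (U : Set X) (y : Y), t.IsOpen U ∧ S = U ×ˢ ({y} : Set Y)}

/-- The vertical topology on `X × Y`: generated by the base
`{{x} × U : x ∈ X, U open in Y}`. -/
def vert {X Y : Type} (t : TopologicalSpace Y) : TopologicalSpace (X × Y) :=
  TopologicalSpace.generateFrom
    {S | ∃ (x : X) (U : Set Y), t.IsOpen U ∧ S = ({x} : Set X) ×ˢ U}

/-- The topological product `L₁ ×ₜ L₂` of two unimodal logics: the set of all
bimodal formulas valid in every bitopological product `𝔛₁ × 𝔛₂` of (nonempty)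
topological spaces with `𝔛₁ ⊨ L₁` and `𝔛₂ ⊨ L₂`. -/
def TopProdLogic (L1 L2 : Set MForm) : Set BForm :=
  {A | ∀ (X Y : Type) (t1 : TopologicalSpace X) (t2 : TopologicalSpace Y),
      Nonempty X → Nonempty Y →
      (∀ B ∈ L1, MTValid t1 B) → (∀ B ∈ L2, MTValid t2 B) →
      BTValid ![horiz t1, vert t2] A}

/-- The Alexandrov topology of a (reflexive transitive) relation `R`:
the topology with base `{R(x) : x ∈ W}`. -/
def alexandrov {W : Type} (R : W → W → Prop) : TopologicalSpace W :=
  TopologicalSpace.generateFrom {S | ∃ x, S = {t | R x t}}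

/-- A space is weakly scattered if every nonempty open set contains an
isolated point. -/
def WeaklyScattered {X : Type} (t : TopologicalSpace X) : Prop :=
  ∀ U : Set X, t.IsOpen U → U.Nonempty → ∃ x ∈ U, t.IsOpen ({x} : Set X)

/-- p-morphism between Kripke 1-frames. -/
def IsPMorphism {W U : Type} (R : W → W → Prop) (S : U → U → Prop) (f : W → U) : Prop :=
  Function.Surjective f ∧ (∀ x y, R x y → S (f x) (f y)) ∧
    (∀ x u, S (f x) u → ∃ y, R x y ∧ f y = u)

/-- p-morphism between Kripke 2-frames. -/
def IsPMorphism2 {W U : Type} (R1 R2 : W → W → Prop) (S1 S2 : U → U → Prop)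
    (f : W → U) : Prop :=
  Function.Surjective f ∧
    (∀ x y, R1 x y → S1 (f x) (f y)) ∧ (∀ x u, S1 (f x) u → ∃ y, R1 x y ∧ f y = u) ∧
    (∀ x y, R2 x y → S2 (f x) (f y)) ∧ (∀ x u, S2 (f x) u → ∃ y, R2 x y ∧ f y = u)

/- ============== The frames 𝕋₂,₂ and 𝕋₂,₂₊₂ ============== -/

/-- The four-letter alphabet {a₁,a₂,b₁,b₂}: `(false, i)` is the a-letter `aᵢ₊₁`
and `(true, i)` is the b-letter `bᵢ₊₁`. -/
abbrev Letter : Type := Bool × Fin 2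

/-- `T₂,₂ = {a₁,a₂,b₁,b₂}*`. -/
abbrev T22 : Type := List Letter

/-- `T₂ = {1,2}*`. -/
abbrev T2W : Type := List (Fin 2)

/-- First relation of `𝕋₂,₂`: append a word over the a-letters. -/
def R1T (w w' : T22) : Prop := ∃ c : T22, (∀ l ∈ c, l.1 = false) ∧ w' = w ++ c

/-- Second relation of `𝕋₂,₂`: append a word over the b-letters. -/
def R2T (w w' : T22) : Prop := ∃ d : T22, (∀ l ∈ d, l.1 = true) ∧ w' = w ++ d

/-- The carrier of `𝕋₂,₂₊₂` : `⟨a, root⟩` is encoded as `(a, none)` and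
`⟨a, b⟩` with `b ∈ T₂` as `(a, some b)`. -/
abbrev W222 : Type := T22 × Option T2W

/-- Generators of `R₁′`. -/
def R1'gen : W222 → W222 → Prop := fun x y =>
  (∃ a a', R1T a a' ∧ x = (a, none) ∧ y = (a', none)) ∨
  (∃ a, x = (a, none) ∧ y = (a, some ([] : T2W)))

/-- `R₁′`: smallest reflexive transitive relation containing the generators. -/
def R1' : W222 → W222 → Prop := Relation.ReflTransGen R1'gen

/-- Generators of `R₂′`. -/
def R2'gen : W222 → W222 → Prop := fun x y =>
  (∃ a a', R2T a a' ∧ x = (a, none) ∧ y = (a', none)) ∨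
  (∃ a b b', b <+: b' ∧ x = (a, some b) ∧ y = (a, some b'))

/-- `R₂′`: smallest reflexive transitive relation containing the generators. -/
def R2' : W222 → W222 → Prop := Relation.ReflTransGen R2'gen

/- ============== Pseudo-infinite paths and the spaces 𝒴 and 𝔛 ============== -/

/-- Infinite sequences over {0,1,2}: `none` encodes 0 and `some i` encodes
`i+1 ∈ {1,2}`. -/
abbrev Seq3 : Type := ℕ → Option (Fin 2)

/-- `W_ω`: pseudo-infinite paths, i.e. sequences with finitely many nonzero
entries. -/
def Wom : Type := {s : Seq3 // {k | s k ≠ none}.Finite}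

/-- `st(s)`: the least `N` such that all entries from `N` on are zero. -/
noncomputable def stN {γ : Type} (s : ℕ → Option γ) : ℕ :=
  sInf {N | ∀ k, N ≤ k → s k = none}

/-- The first `k` entries of a sequence, as a finite word. -/
def takeSeq {γ : Type} (s : ℕ → Option γ) (k : ℕ) : List (Option γ) :=
  List.ofFn (fun i : Fin k => s i.1)

/-- `f_F`: delete all zeros from a finite word. -/
def fF {γ : Type} (l : List (Option γ)) : List γ := l.filterMap id

/-- `f_ω`: delete the zeros from a pseudo-infinite path, producing a finite word. -/
noncomputable def squash {γ : Type} (s : ℕ → Option γ) : List γ := fF (takeSeq s (stN s))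

/-- The basic set `U_k(α) = {β ∈ W_ω : α↾k = β↾k and f_F(α↾k) ⊑ f_ω(β)}`. -/
def Uset (α : Wom) (k : ℕ) : Set Wom :=
  {β | takeSeq β.1 k = takeSeq α.1 k ∧ fF (takeSeq α.1 k) <+: squash β.1}

/-- The topology `T_ω` on `W_ω` generated by the base `{U_k(α) : k > 0}`;
`𝒴 = (W_ω, T_ω)`. -/
def Tom : TopologicalSpace Wom :=
  TopologicalSpace.generateFrom {S | ∃ α k, 0 < k ∧ S = Uset α k}

/-- The basic sets of the space `𝔛`:
`U′_k(α,0) = (U_k(α) × {0}) ∪ (U_k(α) × {n ≥ k})` and `U′_k(α,n) = {⟨α,n⟩}`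
for `n ≥ 1`. -/
def U'set (α : Wom) (k n : ℕ) : Set (Wom × ℕ) :=
  if n = 0 then (Uset α k ×ˢ ({0} : Set ℕ)) ∪ (Uset α k ×ˢ {m : ℕ | k ≤ m})
  else {(α, n)}

/-- The topology of the space `𝔛 = (W_ω × ℕ, T)`. -/
def TX : TopologicalSpace (Wom × ℕ) :=
  TopologicalSpace.generateFrom {S | ∃ α k n, S = U'set α k n}

/-- Interleaving of two paths: the sequence `a_{x₁} b_{y₁} a_{x₂} b_{y₂} …`
(with `a₀ = b₀ = 0`). -/
def interleave (α β : Seq3) : ℕ → Option Letter := fun n =>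
  if n % 2 = 0 then (α (n / 2)).map (fun v => ((false, v) : Letter))
  else (β (n / 2)).map (fun v => ((true, v) : Letter))

/-- The map `g : W_ω × W_ω → T₂,₂` obtained by interleaving and deleting zeros. -/
noncomputable def gmap (α β : Seq3) : T22 := squash (interleave α β)

/-- `g` as a map on pairs. -/
noncomputable def gPair : Wom × Wom → T22 := fun q => gmap q.1.1 q.2.1

/-- `s↾n · 0^ω`. -/
def truncSeq (s : Seq3) (n : ℕ) : Seq3 := fun k => if k < n then s k else none

/-- The tail `γ` of `s = s↾n · γ`. -/
def shiftSeq (s : Seq3) (n : ℕ) : Seq3 := fun k => s (n + k)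

/-- The map `f : 𝔛 × 𝒴 → 𝕋₂,₂₊₂` :
`f(⟨α,0⟩,β) = ⟨g(α,β), root⟩` and for `n ≥ 1`,
`f(⟨α,n⟩,β) = ⟨g(α↾n·0^ω, β↾n·0^ω), f_ω(γ)⟩` where `β = β↾n·γ`. -/
noncomputable def fXY : (Wom × ℕ) × Wom → W222 := fun q =>
  if q.1.2 = 0 then (gmap q.1.1.1 q.2.1, none)
  else (gmap (truncSeq q.1.1.1 q.1.2) (truncSeq q.2.1 q.1.2),
        some (squash (shiftSeq q.2.1 q.1.2)))

/-- An effective encoding of bimodal formulas by natural numbers. -/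
def encodeB : BForm → ℕ
  | .var n => Nat.pair 0 n
  | .bot => Nat.pair 1 0
  | .imp A B => Nat.pair 2 (Nat.pair (encodeB A) (encodeB B))
  | .box i A => Nat.pair 3 (Nat.pair i.1 (encodeB A))

/- ============== Auxiliary development for gPair_pmorphism ============== -/

section GPairAux

open List

/-- generic shift -/
private def shf {γ : Type} (s : ℕ → Option γ) (a : ℕ) : ℕ → Option γ := fun k => s (a + k)

lemma takeSeq_length' {γ : Type} (s : ℕ → Option γ) (k : ℕ) : (takeSeq s k).length = k := by
  simp [takeSeq]

lemma takeSeq_add' {γ : Type} (s : ℕ → Option γ) (a b : ℕ) :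
    takeSeq s (a + b) = takeSeq s a ++ takeSeq (shf s a) b := by
  unfold takeSeq shf
  rw [List.ofFn_add]
  congr 1

lemma fF_append' {γ : Type} (l l' : List (Option γ)) : fF (l ++ l') = fF l ++ fF l' := by
  simp [fF]

lemma fF_cons' {γ : Type} (x : Option γ) (l : List (Option γ)) :
    fF (x :: l) = x.toList ++ fF l := by
  cases x <;> simp [fF, List.filterMap_cons]

lemma takeSeq_eq_iff' {γ : Type} {s t : ℕ → Option γ} {n : ℕ} :
    takeSeq s n = takeSeq t n ↔ ∀ i, i < n → s i = t i := by
  constructor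
  · intro h i hi
    have h1 : i < (takeSeq s n).length := by simp [takeSeq_length', hi]
    have h2 : i < (takeSeq t n).length := by simp [takeSeq_length', hi]
    have := List.getElem_of_eq h h1
    simpa [takeSeq, List.getElem_ofFn] using this
  · intro h
    unfold takeSeq
    rw [List.ofFn_inj]
    funext i
    exact h i.1 i.2

lemma squash_eq' {γ : Type} {s : ℕ → Option γ} {m : ℕ} (h : ∀ k, m ≤ k → s k = none) :
    squash s = fF (takeSeq s m) := by
  have hle : stN s ≤ m := Nat.sInf_le h
  have hmem : ∀ k, stN s ≤ k → s k = none :=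
    Nat.sInf_mem (⟨m, h⟩ : {N | ∀ k, N ≤ k → s k = none}.Nonempty)
  unfold squash
  obtain ⟨b, rfl⟩ : ∃ b, m = stN s + b := ⟨m - stN s, (Nat.add_sub_cancel' hle).symm⟩
  rw [takeSeq_add', fF_append']
  have hnil : fF (takeSeq (shf s (stN s)) b) = [] := by
    rw [fF, List.filterMap_eq_nil_iff]
    intro a ha
    simp only [takeSeq, List.mem_ofFn, Set.mem_range] at ha
    obtain ⟨i, rfl⟩ := ha
    exact hmem _ (Nat.le_add_right _ _)
  rw [hnil, List.append_nil]

lemma fF_takeSeq_prefix' {γ : Type} {s : ℕ → Option γ}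
    (hne : ∃ m, ∀ k, m ≤ k → s k = none) (k : ℕ) : fF (takeSeq s k) <+: squash s := by
  obtain ⟨m, hm⟩ := hne
  have h' : ∀ j, max k m ≤ j → s j = none := fun j hj => hm j (le_trans (le_max_right _ _) hj)
  rw [squash_eq' h']
  obtain ⟨b, hb⟩ : ∃ b, max k m = k + b := ⟨max k m - k, (Nat.add_sub_cancel' (le_max_left _ _)).symm⟩
  rw [hb, takeSeq_add', fF_append']
  exact List.prefix_append _ _

lemma Wom.bound (β : Wom) : ∃ m, ∀ k, m ≤ k → β.1 k = none := by
  classical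
  refine ⟨β.2.toFinset.sup id + 1, fun k hk => ?_⟩
  by_contra h
  have hmem : k ∈ β.2.toFinset := by simpa using h
  have := Finset.le_sup (f := id) hmem
  simp only [id] at this
  omega

lemma mem_Uset_iff {α β : Wom} {k : ℕ} : β ∈ Uset α k ↔ takeSeq β.1 k = takeSeq α.1 k := by
  constructor
  · exact And.left
  · intro h
    refine ⟨h, ?_⟩
    rw [← h]
    exact fF_takeSeq_prefix' (Wom.bound β) k

lemma Uset_mono {α : Wom} {k k' : ℕ} (h : k ≤ k') : Uset α k' ⊆ Uset α k := by
  intro β hβ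
  rw [mem_Uset_iff] at *
  rw [takeSeq_eq_iff'] at *
  exact fun i hi => hβ i (lt_of_lt_of_le hi h)

lemma self_mem_Uset (α : Wom) (k : ℕ) : α ∈ Uset α k := mem_Uset_iff.2 rfl

/- ============== interleave computations ============== -/

def lett (b : Bool) (x : Option (Fin 2)) : T22 := (x.map (fun v => (b, v))).toList

def zipInter : List (Option (Fin 2)) → List (Option (Fin 2)) → T22
  | x :: xs, y :: ys => lett false x ++ lett true y ++ zipInter xs ys
  | _, _ => []

lemma fF_interleave : ∀ (n : ℕ) (α β : Seq3),
    fF (takeSeq (interleave α β) (2 * n)) = zipInter (takeSeq α n) (takeSeq β n) := by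
  intro n
  induction n with
  | zero => intro α β; simp [takeSeq, fF, zipInter]
  | succ n ih =>
    intro α β
    have h2 : 2 * (n + 1) = 2 + 2 * n := by ring
    have h1 : n + 1 = 1 + n := by ring
    rw [h2, h1, takeSeq_add' (interleave α β) 2 (2 * n), fF_append',
        takeSeq_add' α 1 n, takeSeq_add' β 1 n]
    have hshift : shf (interleave α β) 2 = interleave (shf α 1) (shf β 1) := by
      funext k
      have e1 : (2 + k) % 2 = k % 2 := by omega
      have e2 : (2 + k) / 2 = 1 + k / 2 := by omega
      simp [shf, _root_.interleave, e1, e2]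
    rw [hshift, ih (shf α 1) (shf β 1)]
    have ht2 : takeSeq (interleave α β) 2 = [(α 0).map (fun v => ((false, v) : Letter)),
        (β 0).map (fun v => ((true, v) : Letter))] := by
      simp [takeSeq, List.ofFn_succ, _root_.interleave]
    have ht1 : ∀ (s : ℕ → Option (Fin 2)), takeSeq s 1 = [s 0] := by
      intro s; simp [takeSeq, List.ofFn_succ]
    rw [ht2, ht1, ht1]
    rw [fF_cons', fF_cons']
    simp only [fF, List.filterMap_nil, List.append_nil]
    show _ = zipInter (α 0 :: takeSeq (shf α 1) n) (β 0 :: takeSeq (shf β 1) n)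
    rw [zipInter]
    simp [lett, List.append_assoc]

lemma gmap_eq' {α β : Seq3} {n : ℕ} (hα : ∀ j, n ≤ j → α j = none)
    (hβ : ∀ j, n ≤ j → β j = none) :
    gmap α β = zipInter (takeSeq α n) (takeSeq β n) := by
  have hil : ∀ j, 2 * n ≤ j → interleave α β j = none := by
    intro j hj
    have hn : n ≤ j / 2 := by omega
    unfold _root_.interleave
    split
    · rw [hα _ hn]; rfl
    · rw [hβ _ hn]; rfl
  rw [gmap, squash_eq' hil, fF_interleave]

lemma zipInter_append' : ∀ (la lb xs ys : List (Option (Fin 2))), la.length = lb.length →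
    zipInter (la ++ xs) (lb ++ ys) = zipInter la lb ++ zipInter xs ys := by
  intro la
  induction la with
  | nil => intro lb xs ys h; cases lb; · simp [zipInter]
           · simp at h
  | cons x la ih =>
    intro lb xs ys h
    cases lb with
    | nil => simp at h
    | cons y lb =>
      simp only [List.cons_append, zipInter, List.append_assoc]
      rw [ih lb xs ys (by simpa using h)]

lemma zipInter_none_right' : ∀ (xs ys : List (Option (Fin 2))), (∀ o ∈ ys, o = none) →
    xs.length = ys.length →
    zipInter xs ys = (fF xs).map (fun v => ((false, v) : Letter)) := by
  intro xs
  induction xs with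
  | nil => intro ys _ h; cases ys; · simp [zipInter, fF]
           · simp at h
  | cons x xs ih =>
    intro ys hys h
    cases ys with
    | nil => simp at h
    | cons y ys =>
      have hy : y = none := hys y List.mem_cons_self
      subst hy
      rw [zipInter, fF_cons', List.map_append, ih ys (fun o ho => hys o (List.mem_cons_of_mem _ ho)) (by simpa using h)]
      cases x <;> simp [lett]

lemma zipInter_none_left' : ∀ (xs ys : List (Option (Fin 2))), (∀ o ∈ xs, o = none) →
    xs.length = ys.length →
    zipInter xs ys = (fF ys).map (fun v => ((true, v) : Letter)) := by
  intro xs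
  induction xs with
  | nil => intro ys _ h; cases ys; · simp [zipInter, fF]
           · simp at h
  | cons x xs ih =>
    intro ys hxs h
    cases ys with
    | nil => simp at h
    | cons y ys =>
      have hx : x = none := hxs x List.mem_cons_self
      subst hx
      rw [zipInter, fF_cons', List.map_append, ih ys (fun o ho => hxs o (List.mem_cons_of_mem _ ho)) (by simpa using h)]
      cases y <;> simp [lett]

lemma gmap_tail_a {α β α' : Seq3} {n b : ℕ}
    (hα : ∀ j, n ≤ j → α j = none) (hβ : ∀ j, n ≤ j → β j = none)
    (hα' : ∀ j, n + b ≤ j → α' j = none) (hagree : ∀ j, j < n → α' j = α j) :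
    gmap α' β = gmap α β ++ (fF (takeSeq (shf α' n) b)).map (fun v => ((false, v) : Letter)) := by
  have hβm : ∀ j, n + b ≤ j → β j = none := fun j hj => hβ j (by omega)
  rw [gmap_eq' hα' hβm, gmap_eq' hα hβ, takeSeq_add' α' n b, takeSeq_add' β n b,
      zipInter_append' _ _ _ _ (by simp [takeSeq_length'])]
  congr 1
  · congr 1
    rw [takeSeq_eq_iff']
    exact hagree
  · apply zipInter_none_right'
    · intro o ho
      simp only [takeSeq, List.mem_ofFn, Set.mem_range] at ho
      obtain ⟨i, rfl⟩ := ho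
      exact hβ _ (Nat.le_add_right _ _)
    · simp [takeSeq_length']

lemma gmap_tail_b {α β β' : Seq3} {n b : ℕ}
    (hα : ∀ j, n ≤ j → α j = none) (hβ : ∀ j, n ≤ j → β j = none)
    (hβ' : ∀ j, n + b ≤ j → β' j = none) (hagree : ∀ j, j < n → β' j = β j) :
    gmap α β' = gmap α β ++ (fF (takeSeq (shf β' n) b)).map (fun v => ((true, v) : Letter)) := by
  have hαm : ∀ j, n + b ≤ j → α j = none := fun j hj => hα j (by omega)
  rw [gmap_eq' hαm hβ', gmap_eq' hα hβ, takeSeq_add' α n b, takeSeq_add' β' n b,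
      zipInter_append' _ _ _ _ (by simp [takeSeq_length'])]
  congr 1
  · congr 1
    rw [takeSeq_eq_iff']
    exact hagree
  · apply zipInter_none_left'
    · intro o ho
      simp only [takeSeq, List.mem_ofFn, Set.mem_range] at ho
      obtain ⟨i, rfl⟩ := ho
      exact hα _ (Nat.le_add_right _ _)
    · simp [takeSeq_length']

end GPairAux


section GPairTop

open TopologicalSpace

lemma R1T_refl : Reflexive R1T := fun w => ⟨[], by simp, by simp⟩

lemma R1T_trans : Transitive R1T := by
  rintro a b c ⟨c1, h1, rfl⟩ ⟨c2, h2, rfl⟩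
  refine ⟨c1 ++ c2, ?_, by simp⟩
  intro l hl
  rcases List.mem_append.1 hl with h | h
  · exact h1 l h
  · exact h2 l h

lemma R2T_refl : Reflexive R2T := fun w => ⟨[], by simp, by simp⟩

lemma R2T_trans : Transitive R2T := by
  rintro a b c ⟨c1, h1, rfl⟩ ⟨c2, h2, rfl⟩
  refine ⟨c1 ++ c2, ?_, by simp⟩
  intro l hl
  rcases List.mem_append.1 hl with h | h
  · exact h1 l h
  · exact h2 l h

lemma alexandrov_isOpen_of {W : Type} {R : W → W → Prop} (hR : Reflexive R) {S : Set W}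
    (h : ∀ x ∈ S, ∀ y, R x y → y ∈ S) : (alexandrov R).IsOpen S := by
  have hS : S = ⋃ x ∈ S, {t | R x t} := by
    apply subset_antisymm
    · intro x hx
      exact Set.mem_biUnion hx (hR x)
    · intro y hy
      simp only [Set.mem_iUnion] at hy
      obtain ⟨x, hx, hxy⟩ := hy
      exact h x hx y hxy
  rw [hS]
  letI : TopologicalSpace W := alexandrov R
  apply isOpen_biUnion
  intro x _
  exact TopologicalSpace.GenerateOpen.basic _ ⟨x, rfl⟩

lemma upclosed_of_alexandrov {W : Type} {R : W → W → Prop} (hT : Transitive R) {S : Set W}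
    (h : (alexandrov R).IsOpen S) : ∀ x ∈ S, ∀ y, R x y → y ∈ S := by
  change TopologicalSpace.GenerateOpen _ S at h
  induction h with
  | basic U hU =>
    obtain ⟨x, rfl⟩ := hU
    intro a ha y hy
    exact hT ha hy
  | univ => intro x _ y _; trivial
  | inter U V _ _ ihU ihV =>
    intro x hx y hy
    exact ⟨ihU x hx.1 y hy, ihV x hx.2 y hy⟩
  | sUnion K _ ih =>
    rintro x ⟨U, hU, hxU⟩ y hy
    exact ⟨U, hU, ih U hU x hxU y hy⟩

lemma isOpen_Uset (α : Wom) (k : ℕ) : Tom.IsOpen (Uset α k) := by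
  rcases Nat.eq_zero_or_pos k with rfl | hk
  · have : Uset α 0 = Set.univ := by
      ext β
      simp only [Set.mem_univ, iff_true]
      exact mem_Uset_iff.2 (by simp [takeSeq])
    rw [this]
    exact TopologicalSpace.GenerateOpen.univ
  · exact TopologicalSpace.GenerateOpen.basic _ ⟨α, k, hk, rfl⟩

lemma tom_nbhd {U : Set Wom} (h : Tom.IsOpen U) : ∀ x ∈ U, ∃ k, Uset x k ⊆ U := by
  change TopologicalSpace.GenerateOpen _ U at h
  induction h with
  | basic S hS =>
    obtain ⟨α, k, _, rfl⟩ := hS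
    intro x hx
    refine ⟨k, fun y hy => ?_⟩
    rw [mem_Uset_iff] at *
    rw [hy, hx]
  | univ => intro x _; exact ⟨0, fun _ _ => trivial⟩
  | inter U V _ _ ihU ihV =>
    intro x hx
    obtain ⟨k1, h1⟩ := ihU x hx.1
    obtain ⟨k2, h2⟩ := ihV x hx.2
    exact ⟨max k1 k2, fun y hy =>
      ⟨h1 (Uset_mono (le_max_left _ _) hy), h2 (Uset_mono (le_max_right _ _) hy)⟩⟩
  | sUnion K _ ih =>
    rintro x ⟨U, hU, hxU⟩
    obtain ⟨k, hk⟩ := ih U hU x hxU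
    exact ⟨k, hk.trans (Set.subset_sUnion_of_mem hU)⟩

lemma horiz_nbhd {S : Set (Wom × Wom)} (h : (horiz Tom).IsOpen S) :
    ∀ p ∈ S, ∃ k, Uset p.1 k ×ˢ ({p.2} : Set Wom) ⊆ S := by
  change TopologicalSpace.GenerateOpen _ S at h
  induction h with
  | basic T hT =>
    obtain ⟨U, y, hU, rfl⟩ := hT
    intro p hp
    obtain ⟨k, hk⟩ := tom_nbhd hU p.1 hp.1
    refine ⟨k, fun q hq => ⟨hk hq.1, ?_⟩⟩
    have : q.2 = p.2 := hq.2
    rw [this]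
    exact hp.2
  | univ => intro p _; exact ⟨0, fun _ _ => trivial⟩
  | inter U V _ _ ihU ihV =>
    intro p hp
    obtain ⟨k1, h1⟩ := ihU p hp.1
    obtain ⟨k2, h2⟩ := ihV p hp.2
    refine ⟨max k1 k2, fun q hq => ⟨h1 ⟨Uset_mono (le_max_left _ _) hq.1, hq.2⟩,
      h2 ⟨Uset_mono (le_max_right _ _) hq.1, hq.2⟩⟩⟩
  | sUnion K _ ih =>
    rintro p ⟨U, hU, hpU⟩
    obtain ⟨k, hk⟩ := ih U hU p hpU
    exact ⟨k, hk.trans (Set.subset_sUnion_of_mem hU)⟩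

lemma vert_nbhd {S : Set (Wom × Wom)} (h : (vert Tom).IsOpen S) :
    ∀ p ∈ S, ∃ k, ({p.1} : Set Wom) ×ˢ Uset p.2 k ⊆ S := by
  change TopologicalSpace.GenerateOpen _ S at h
  induction h with
  | basic T hT =>
    obtain ⟨x, U, hU, rfl⟩ := hT
    intro p hp
    obtain ⟨k, hk⟩ := tom_nbhd hU p.2 hp.2
    refine ⟨k, fun q hq => ⟨?_, hk hq.2⟩⟩
    have : q.1 = p.1 := hq.1
    rw [this]
    exact hp.1
  | univ => intro p _; exact ⟨0, fun _ _ => trivial⟩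
  | inter U V _ _ ihU ihV =>
    intro p hp
    obtain ⟨k1, h1⟩ := ihU p hp.1
    obtain ⟨k2, h2⟩ := ihV p hp.2
    refine ⟨max k1 k2, fun q hq => ⟨h1 ⟨hq.1, Uset_mono (le_max_left _ _) hq.2⟩,
      h2 ⟨hq.1, Uset_mono (le_max_right _ _) hq.2⟩⟩⟩
  | sUnion K _ ih =>
    rintro p ⟨U, hU, hpU⟩
    obtain ⟨k, hk⟩ := ih U hU p hpU
    exact ⟨k, hk.trans (Set.subset_sUnion_of_mem hU)⟩

lemma horiz_isOpen_of {S : Set (Wom × Wom)}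
    (h : ∀ p ∈ S, ∃ k, Uset p.1 k ×ˢ ({p.2} : Set Wom) ⊆ S) : (horiz Tom).IsOpen S := by
  have hS : S = ⋃₀ {T | (horiz Tom).IsOpen T ∧ T ⊆ S} := by
    apply subset_antisymm
    · intro p hp
      obtain ⟨k, hk⟩ := h p hp
      refine ⟨Uset p.1 k ×ˢ ({p.2} : Set Wom), ⟨?_, hk⟩, ⟨self_mem_Uset _ _, rfl⟩⟩
      exact TopologicalSpace.GenerateOpen.basic _ ⟨Uset p.1 k, p.2, isOpen_Uset _ _, rfl⟩
    · rintro p ⟨T, ⟨_, hTS⟩, hpT⟩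
      exact hTS hpT
  rw [hS]
  exact (horiz Tom).isOpen_sUnion _ (fun T hT => hT.1)

lemma vert_isOpen_of {S : Set (Wom × Wom)}
    (h : ∀ p ∈ S, ∃ k, ({p.1} : Set Wom) ×ˢ Uset p.2 k ⊆ S) : (vert Tom).IsOpen S := by
  have hS : S = ⋃₀ {T | (vert Tom).IsOpen T ∧ T ⊆ S} := by
    apply subset_antisymm
    · intro p hp
      obtain ⟨k, hk⟩ := h p hp
      refine ⟨({p.1} : Set Wom) ×ˢ Uset p.2 k, ⟨?_, hk⟩, ⟨rfl, self_mem_Uset _ _⟩⟩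
      exact TopologicalSpace.GenerateOpen.basic _ ⟨p.1, Uset p.2 k, isOpen_Uset _ _, rfl⟩
    · rintro p ⟨T, ⟨_, hTS⟩, hpT⟩
      exact hTS hpT
  rw [hS]
  exact (vert Tom).isOpen_sUnion _ (fun T hT => hT.1)

/- ============== surjectivity encoders ============== -/

def encA : T22 → List (Option (Fin 2))
  | [] => []
  | (false, v) :: w => some v :: encA w
  | (true, _) :: w => none :: encA w

def encBl : T22 → List (Option (Fin 2))
  | [] => []
  | (false, _) :: w => none :: encBl w
  | (true, v) :: w => some v :: encBl w

lemma encA_length : ∀ w : T22, (encA w).length = w.length := by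
  intro w
  induction w with
  | nil => rfl
  | cons l w ih => obtain ⟨b, v⟩ := l; cases b <;> simp [encA, ih]

lemma encBl_length : ∀ w : T22, (encBl w).length = w.length := by
  intro w
  induction w with
  | nil => rfl
  | cons l w ih => obtain ⟨b, v⟩ := l; cases b <;> simp [encBl, ih]

lemma zipInter_enc : ∀ w : T22, zipInter (encA w) (encBl w) = w := by
  intro w
  induction w with
  | nil => rfl
  | cons l w ih => obtain ⟨b, v⟩ := l; cases b <;> simp [encA, encBl, zipInter, lett, ih]

def seqOfList (l : List (Option (Fin 2))) : Seq3 := fun n => l.getD n none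

lemma seqOfList_none {l : List (Option (Fin 2))} {n : ℕ} (h : l.length ≤ n) :
    seqOfList l n = none := List.getD_eq_default _ _ h

def womOfList (l : List (Option (Fin 2))) : Wom :=
  ⟨seqOfList l, Set.Finite.subset (Set.finite_Iio l.length) (by
    intro n hn
    simp only [Set.mem_setOf_eq] at hn
    by_contra hlt
    exact hn (seqOfList_none (by simpa [Set.mem_Iio, not_lt] using hlt)))⟩

lemma takeSeq_seqOfList (l : List (Option (Fin 2))) : takeSeq (seqOfList l) l.length = l := by
  apply List.ext_getElem (by simp [takeSeq_length'])
  intro i h1 h2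
  simp only [takeSeq, List.getElem_ofFn, seqOfList]
  exact List.getD_eq_getElem _ _ h2

end GPairTop


/-- the interleaving map g is a p-morphism (surjective, open and
continuous in each topology) from 𝒴 × 𝒴 onto Top₂(𝕋₂,₂). -/
theorem gPair_pmorphism :
    Function.Surjective gPair ∧
    @Continuous _ _ (horiz Tom) (alexandrov R1T) gPair ∧
    @IsOpenMap _ _ (horiz Tom) (alexandrov R1T) gPair ∧
    @Continuous _ _ (vert Tom) (alexandrov R2T) gPair ∧
    @IsOpenMap _ _ (vert Tom) (alexandrov R2T) gPair := by
  refine ⟨?_, ?_, ?_, ?_, ?_⟩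
  · -- surjectivity
    intro w
    refine ⟨(womOfList (encA w), womOfList (encBl w)), ?_⟩
    show gmap (seqOfList (encA w)) (seqOfList (encBl w)) = w
    rw [gmap_eq' (n := w.length)
        (fun j hj => seqOfList_none (by rw [encA_length]; exact hj))
        (fun j hj => seqOfList_none (by rw [encBl_length]; exact hj)),
      show takeSeq (seqOfList (encA w)) w.length = encA w from by
        rw [← encA_length w]; exact takeSeq_seqOfList _,
      show takeSeq (seqOfList (encBl w)) w.length = encBl w from by
        rw [← encBl_length w]; exact takeSeq_seqOfList _,
      zipInter_enc]
  · -- horizontal continuity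
    rw [continuous_def]
    intro V hV
    apply horiz_isOpen_of
    rintro ⟨α, β⟩ hp
    obtain ⟨n1, h1⟩ := Wom.bound α
    obtain ⟨n2, h2⟩ := Wom.bound β
    refine ⟨max n1 n2, ?_⟩
    rintro ⟨α', β'⟩ ⟨hq1, hq2⟩
    have hβ' : β' = β := hq2
    subst hβ'
    obtain ⟨m, hm⟩ := Wom.bound α'
    have hα : ∀ j, max n1 n2 ≤ j → α.1 j = none := fun j hj => h1 j (by omega)
    have hβ : ∀ j, max n1 n2 ≤ j → β'.1 j = none := fun j hj => h2 j (by omega)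
    have hα' : ∀ j, max n1 n2 + m ≤ j → α'.1 j = none := fun j hj => hm j (by omega)
    have hagree : ∀ j, j < max n1 n2 → α'.1 j = α.1 j :=
      takeSeq_eq_iff'.1 (mem_Uset_iff.1 hq1)
    have key := gmap_tail_a hα hβ hα' hagree
    have hR : R1T (gPair (α, β')) (gPair (α', β')) := by
      refine ⟨_, ?_, key⟩
      intro l hl
      simp only [List.mem_map] at hl
      obtain ⟨v, _, rfl⟩ := hl
      rfl
    exact Set.mem_preimage.2 (upclosed_of_alexandrov R1T_trans hV _ (Set.mem_preimage.1 hp) _ hR)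
  · -- horizontal openness
    intro S hS
    apply alexandrov_isOpen_of R1T_refl
    rintro w ⟨p, hpS, rfl⟩ y hRy
    obtain ⟨k, hk⟩ := horiz_nbhd hS p hpS
    obtain ⟨n1, h1⟩ := Wom.bound p.1
    obtain ⟨n2, h2⟩ := Wom.bound p.2
    obtain ⟨c, hc, rfl⟩ := hRy
    set n := max k (max n1 n2) with hn
    set e : List (Fin 2) := c.map Prod.snd with he
    have hce : e.map (fun v => ((false, v) : Letter)) = c := by
      rw [he, List.map_map]
      have : ∀ l ∈ c, ((fun v => ((false, v) : Letter)) ∘ Prod.snd) l = id l := by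
        intro l hl
        have := hc l hl
        simp only [Function.comp_apply, id]
        rw [← this]
      rw [List.map_congr_left this, List.map_id]
    set α' : Seq3 := fun j => if j < n then p.1.1 j else e[j - n]? with hα'def
    have hα'tail : ∀ j, n + e.length ≤ j → α' j = none := by
      intro j hj
      rw [hα'def]
      simp only
      rw [if_neg (by omega)]
      exact List.getElem?_eq_none (by omega)
    have hα'wom : {j | α' j ≠ none}.Finite := by
      apply Set.Finite.subset (Set.finite_Iio (n + e.length))
      intro j hj
      simp only [Set.mem_setOf_eq] at hj
      by_contra hge
      rw [Set.mem_Iio, not_lt] at hge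
      exact hj (hα'tail j hge)
    have hagree : ∀ j, j < n → α' j = p.1.1 j := fun j hj => if_pos hj
    have hqU : (⟨α', hα'wom⟩ : Wom) ∈ Uset p.1 k := by
      apply mem_Uset_iff.2
      rw [takeSeq_eq_iff']
      intro i hi
      exact hagree i (by omega)
    have hqS : ((⟨α', hα'wom⟩ : Wom), p.2) ∈ S := hk ⟨hqU, rfl⟩
    have hα : ∀ j, n ≤ j → p.1.1 j = none := fun j hj => h1 j (by omega)
    have hβ : ∀ j, n ≤ j → p.2.1 j = none := fun j hj => h2 j (by omega)
    have key := gmap_tail_a hα hβ hα'tail hagree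
    have htail : takeSeq (shf α' n) e.length = e.map some := by
      apply List.ext_getElem (by simp [takeSeq_length'])
      intro i hi1 hi2
      have hie : i < e.length := by simpa using hi2
      simp only [takeSeq, List.getElem_ofFn, shf, List.getElem_map]
      rw [hα'def]
      simp only
      rw [if_neg (by omega), show n + i - n = i from by omega]
      exact List.getElem?_eq_getElem hie
    have hfF : fF (e.map some) = e := by
      rw [fF, List.filterMap_map]
      simp
    refine ⟨((⟨α', hα'wom⟩ : Wom), p.2), hqS, ?_⟩
    show gmap α' p.2.1 = gPair p ++ c
    rw [key, htail, hfF, hce]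
    rfl
  · -- vertical continuity
    rw [continuous_def]
    intro V hV
    apply vert_isOpen_of
    rintro ⟨α, β⟩ hp
    obtain ⟨n1, h1⟩ := Wom.bound α
    obtain ⟨n2, h2⟩ := Wom.bound β
    refine ⟨max n1 n2, ?_⟩
    rintro ⟨α', β'⟩ ⟨hq1, hq2⟩
    have hα' : α' = α := hq1
    subst hα'
    obtain ⟨m, hm⟩ := Wom.bound β'
    have hα : ∀ j, max n1 n2 ≤ j → α'.1 j = none := fun j hj => h1 j (by omega)
    have hβ : ∀ j, max n1 n2 ≤ j → β.1 j = none := fun j hj => h2 j (by omega)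
    have hβ'b : ∀ j, max n1 n2 + m ≤ j → β'.1 j = none := fun j hj => hm j (by omega)
    have hagree : ∀ j, j < max n1 n2 → β'.1 j = β.1 j :=
      takeSeq_eq_iff'.1 (mem_Uset_iff.1 hq2)
    have key := gmap_tail_b hα hβ hβ'b hagree
    have hR : R2T (gPair (α', β)) (gPair (α', β')) := by
      refine ⟨_, ?_, key⟩
      intro l hl
      simp only [List.mem_map] at hl
      obtain ⟨v, _, rfl⟩ := hl
      rfl
    exact Set.mem_preimage.2 (upclosed_of_alexandrov R2T_trans hV _ (Set.mem_preimage.1 hp) _ hR)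
  · -- vertical openness
    intro S hS
    apply alexandrov_isOpen_of R2T_refl
    rintro w ⟨p, hpS, rfl⟩ y hRy
    obtain ⟨k, hk⟩ := vert_nbhd hS p hpS
    obtain ⟨n1, h1⟩ := Wom.bound p.1
    obtain ⟨n2, h2⟩ := Wom.bound p.2
    obtain ⟨c, hc, rfl⟩ := hRy
    set n := max k (max n1 n2) with hn
    set e : List (Fin 2) := c.map Prod.snd with he
    have hce : e.map (fun v => ((true, v) : Letter)) = c := by
      rw [he, List.map_map]
      have : ∀ l ∈ c, ((fun v => ((true, v) : Letter)) ∘ Prod.snd) l = id l := by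
        intro l hl
        have := hc l hl
        simp only [Function.comp_apply, id]
        rw [← this]
      rw [List.map_congr_left this, List.map_id]
    set β' : Seq3 := fun j => if j < n then p.2.1 j else e[j - n]? with hβ'def
    have hβ'tail : ∀ j, n + e.length ≤ j → β' j = none := by
      intro j hj
      rw [hβ'def]
      simp only
      rw [if_neg (by omega)]
      exact List.getElem?_eq_none (by omega)
    have hβ'wom : {j | β' j ≠ none}.Finite := by
      apply Set.Finite.subset (Set.finite_Iio (n + e.length))
      intro j hj
      simp only [Set.mem_setOf_eq] at hj
      by_contra hge
      rw [Set.mem_Iio, not_lt] at hge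
      exact hj (hβ'tail j hge)
    have hagree : ∀ j, j < n → β' j = p.2.1 j := fun j hj => if_pos hj
    have hqU : (⟨β', hβ'wom⟩ : Wom) ∈ Uset p.2 k := by
      apply mem_Uset_iff.2
      rw [takeSeq_eq_iff']
      intro i hi
      exact hagree i (by omega)
    have hqS : (p.1, (⟨β', hβ'wom⟩ : Wom)) ∈ S := hk ⟨rfl, hqU⟩
    have hα : ∀ j, n ≤ j → p.1.1 j = none := fun j hj => h1 j (by omega)
    have hβ : ∀ j, n ≤ j → p.2.1 j = none := fun j hj => h2 j (by omega)
    have key := gmap_tail_b hα hβ hβ'tail hagree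
    have htail : takeSeq (shf β' n) e.length = e.map some := by
      apply List.ext_getElem (by simp [takeSeq_length'])
      intro i hi1 hi2
      have hie : i < e.length := by simpa using hi2
      simp only [takeSeq, List.getElem_ofFn, shf, List.getElem_map]
      rw [hβ'def]
      simp only
      rw [if_neg (by omega), show n + i - n = i from by omega]
      exact List.getElem?_eq_getElem hie
    have hfF : fF (e.map some) = e := by
      rw [fF, List.filterMap_map]
      simp
    refine ⟨(p.1, (⟨β', hβ'wom⟩ : Wom)), hqS, ?_⟩
    show gmap p.1.1 β' = gPair p ++ c
    rw [key, htail, hfF, hce]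
    rfl
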